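/- Let 0 < s < 1, r > 0, and s² < β < 1, with ψ, φ, P₁, P₂², P₃ as in the discriminant setup. Then P₁ < 0, and consequently for all real u, v not both zero, P₁ u² + P₂ u v + P₃ v² < 0 (where P₂ is either square root of P₂²). -/

import Mathlib

noncomputable def coth (x : ℝ) : ℝ := Real.cosh x / Real.sinh x

noncomputable def ψ (a : ℝ) : ℝ := a * coth a - 1

noncomputable def φ (a : ℝ) : ℝ := Real.sinh a - a

open Real Set

/-- Generic: positive derivative on `(0,∞)` gives `f 0 < f x` for `x > 0`. -/
lemma aux_pos_of_deriv (f f' : ℝ → ℝ) (hf : ∀ x, HasDerivAt f (f' x) x)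
    (hf' : ∀ x, 0 < x → 0 < f' x) : ∀ x, 0 < x → f 0 < f x := by
  intro x hx
  have hm : StrictMonoOn f (Ici 0) := by
    apply strictMonoOn_of_deriv_pos (convex_Ici 0)
      (fun y _ => (hf y).continuousAt.continuousWithinAt)
    intro y hy
    rw [interior_Ici] at hy
    rw [(hf y).deriv]
    exact hf' y hy
  exact hm (mem_Ici.2 (le_refl 0)) (mem_Ici.2 (le_of_lt hx)) hx

/-- Generic: nonnegative derivative on `(0,∞)` gives `f 0 ≤ f x` for `x ≥ 0`. -/
lemma aux_nonneg_of_deriv (f f' : ℝ → ℝ) (hf : ∀ x, HasDerivAt f (f' x) x)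
    (hf' : ∀ x, 0 < x → 0 ≤ f' x) : ∀ x, 0 ≤ x → f 0 ≤ f x := by
  intro x hx
  have hm : MonotoneOn f (Ici 0) := by
    apply monotoneOn_of_deriv_nonneg (convex_Ici 0)
      (fun y _ => (hf y).continuousAt.continuousWithinAt)
      (fun y hy => (hf y).differentiableAt.differentiableWithinAt)
    intro y hy
    rw [interior_Ici] at hy
    rw [(hf y).deriv]
    exact hf' y hy
  exact hm (mem_Ici.2 (le_refl 0)) (mem_Ici.2 hx) hx

lemma sinh_lt_mul_cosh {x : ℝ} (hx : 0 < x) : Real.sinh x < x * Real.cosh x := by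
  have h := aux_pos_of_deriv (fun y => y * Real.cosh y - Real.sinh y)
    (fun y => (1 * Real.cosh y + y * Real.sinh y) - Real.cosh y)
    (fun y => ((hasDerivAt_id y).mul (Real.hasDerivAt_cosh y)).sub (Real.hasDerivAt_sinh y))
    (fun y hy => by
      have h1 : 0 < Real.sinh y := Real.sinh_pos_iff.2 hy
      nlinarith)
    x hx
  simp only [Real.cosh_zero, Real.sinh_zero, zero_mul, sub_zero] at h
  linarith

lemma ψ_pos {x : ℝ} (hx : 0 < x) : 0 < ψ x := by
  have hs : 0 < Real.sinh x := Real.sinh_pos_iff.2 hx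
  have h := sinh_lt_mul_cosh hx
  unfold ψ coth
  rw [sub_pos, ← mul_div_assoc, lt_div_iff₀ hs, one_mul]
  exact h

lemma ψ_strictMono : StrictMonoOn ψ (Ioi 0) := by
  apply strictMonoOn_of_deriv_pos (convex_Ioi 0)
  · intro y hy
    have hs : Real.sinh y ≠ 0 := (Real.sinh_pos_iff.2 hy).ne'
    have : ContinuousAt ψ y := by
      unfold ψ coth
      exact (continuousAt_id.mul
        ((Real.continuous_cosh.continuousAt).div (Real.continuous_sinh.continuousAt) hs)).sub
        continuousAt_const
    exact this.continuousWithinAt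
  · intro y hy
    rw [interior_Ioi] at hy
    have hs : 0 < Real.sinh y := Real.sinh_pos_iff.2 hy
    have hd : HasDerivAt ψ
        ((1 * (Real.cosh y / Real.sinh y) +
          y * ((Real.sinh y * Real.sinh y - Real.cosh y * Real.cosh y) / Real.sinh y ^ 2)) - 0) y := by
      unfold ψ coth
      exact ((hasDerivAt_id y).mul
        ((Real.hasDerivAt_cosh y).div (Real.hasDerivAt_sinh y) hs.ne')).sub (hasDerivAt_const y 1)
    rw [hd.deriv]
    have hsq : Real.cosh y ^ 2 - Real.sinh y ^ 2 = 1 := Real.cosh_sq_sub_sinh_sq y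
    have hyc : y < Real.sinh y * Real.cosh y := by
      have h1 : y < Real.sinh y := Real.self_lt_sinh_iff.2 hy
      nlinarith [Real.one_le_cosh y]
    rw [sub_zero]
    have key : 1 * (Real.cosh y / Real.sinh y) +
          y * ((Real.sinh y * Real.sinh y - Real.cosh y * Real.cosh y) / Real.sinh y ^ 2)
        = (Real.sinh y * Real.cosh y - y) / Real.sinh y ^ 2 := by
      field_simp
      linear_combination (-y) * hsq
    rw [key]
    apply div_pos (by linarith) (by positivity)

lemma sinh_mul_le {t : ℝ} (ht0 : 0 ≤ t) (ht1 : t ≤ 1) :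
    ∀ r, 0 ≤ r → Real.sinh (r * t) ≤ t * Real.sinh r := by
  have h := aux_nonneg_of_deriv (fun y => t * Real.sinh y - Real.sinh (y * t))
    (fun y => t * Real.cosh y - Real.cosh (y * t) * (1 * t))
    (fun y => ((Real.hasDerivAt_sinh y).const_mul t).sub
      (((hasDerivAt_id y).mul_const t).sinh))
    (fun y hy => by
      have hc : Real.cosh (y * t) ≤ Real.cosh y := by
        rw [Real.cosh_le_cosh, abs_of_nonneg (by positivity), abs_of_nonneg hy.le]
        nlinarith
      nlinarith [Real.cosh_pos (x := y * t)])
  intro r hr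
  have h2 := h r hr
  simp only [zero_mul, Real.sinh_zero, mul_zero, sub_zero] at h2
  linarith

lemma phi_scale {t : ℝ} (ht0 : 0 ≤ t) (ht1 : t ≤ 1) :
    ∀ r, 0 ≤ r → φ (2 * r * t) ≤ t ^ 3 * φ (2 * r) := by
  have h := aux_nonneg_of_deriv
    (fun y => t ^ 3 * (Real.sinh (2 * y) - 2 * y) - (Real.sinh (2 * y * t) - 2 * y * t))
    (fun y => t ^ 3 * (Real.cosh (2 * y) * (2 * 1) - 2 * 1) -
      (Real.cosh (2 * y * t) * (2 * 1 * t) - 2 * 1 * t))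
    (fun y => ((((hasDerivAt_id y).const_mul 2).sinh.sub
        ((hasDerivAt_id y).const_mul 2)).const_mul (t ^ 3)).sub
      ((((hasDerivAt_id y).const_mul 2).mul_const t).sinh.sub
        (((hasDerivAt_id y).const_mul 2).mul_const t)))
    (fun y hy => by
      have h1 : Real.sinh (y * t) ≤ t * Real.sinh y := sinh_mul_le ht0 ht1 y hy.le
      have h2 : 0 ≤ Real.sinh (y * t) := Real.sinh_nonneg_iff.2 (by positivity)
      have h3 : 0 ≤ Real.sinh y := Real.sinh_nonneg_iff.2 hy.le
      have e1 : Real.cosh (2 * y) = Real.cosh y ^ 2 + Real.sinh y ^ 2 := Real.cosh_two_mul y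
      have e2 : Real.cosh (2 * y * t) = Real.cosh (y * t) ^ 2 + Real.sinh (y * t) ^ 2 := by
        rw [show 2 * y * t = 2 * (y * t) by ring]; exact Real.cosh_two_mul (y * t)
      have q1 : Real.cosh y ^ 2 - Real.sinh y ^ 2 = 1 := Real.cosh_sq_sub_sinh_sq y
      have q2 : Real.cosh (y * t) ^ 2 - Real.sinh (y * t) ^ 2 = 1 :=
        Real.cosh_sq_sub_sinh_sq (y * t)
      rw [e1, e2]
      have hsq2 : Real.sinh (y * t) ^ 2 ≤ t ^ 2 * Real.sinh y ^ 2 := by nlinarith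
      have q1' : t ^ 3 * Real.cosh y ^ 2 = t ^ 3 * Real.sinh y ^ 2 + t ^ 3 := by
        linear_combination t ^ 3 * q1
      have q2' : t * Real.cosh (y * t) ^ 2 = t * Real.sinh (y * t) ^ 2 + t := by
        linear_combination t * q2
      nlinarith [mul_le_mul_of_nonneg_left hsq2 ht0, q1', q2'])
  intro r hr
  have h2 := h r hr
  norm_num at h2
  unfold φ
  ring_nf at h2 ⊢
  linarith
lemma L2 : ∀ r, 0 ≤ r → 4 * (r * Real.cosh r - Real.sinh r) ≤ φ (2 * r) := by
  have h := aux_nonneg_of_deriv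
    (fun y => (Real.sinh (2 * y) - 2 * y) - 4 * (y * Real.cosh y - Real.sinh y))
    (fun y => (Real.cosh (2 * y) * (2 * 1) - 2 * 1) -
      4 * ((1 * Real.cosh y + y * Real.sinh y) - Real.cosh y))
    (fun y => ((((hasDerivAt_id y).const_mul 2).sinh.sub
        ((hasDerivAt_id y).const_mul 2)).sub
      ((((hasDerivAt_id y).mul (Real.hasDerivAt_cosh y)).sub
        (Real.hasDerivAt_sinh y)).const_mul 4)))
    (fun y hy => by
      have h1 : y < Real.sinh y := Real.self_lt_sinh_iff.2 hy
      have e1 : Real.cosh (2 * y) = Real.cosh y ^ 2 + Real.sinh y ^ 2 := Real.cosh_two_mul y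
      have q1 : Real.cosh y ^ 2 - Real.sinh y ^ 2 = 1 := Real.cosh_sq_sub_sinh_sq y
      rw [e1]
      nlinarith [mul_pos (Real.sinh_pos_iff.2 hy) (sub_pos.2 h1)])
  intro r hr
  have h2 := h r hr
  norm_num at h2
  unfold φ
  ring_nf at h2 ⊢
  linarith

lemma Fpos {t : ℝ} (ht0 : 0 < t) (ht1 : t < 1) :
    ∀ r, 0 < r →
      0 < (t ^ 2 / 2) * (Real.sinh (r * (1 + t)) / (1 + t) - Real.sinh (r * (1 - t)) / (1 - t)) -
        (r * t * Real.cosh (r * t) - Real.sinh (r * t)) := by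
  have hpt : (0:ℝ) < 1 + t := by linarith
  have hmt : (0:ℝ) < 1 - t := by linarith
  have hder : ∀ y : ℝ, HasDerivAt
      (fun y => (t ^ 2 / 2) * (Real.sinh (y * (1 + t)) / (1 + t) -
          Real.sinh (y * (1 - t)) / (1 - t)) -
        (y * t * Real.cosh (y * t) - Real.sinh (y * t)))
      (t ^ 2 * Real.sinh (y * t) * (Real.sinh y - y)) y := by
    intro y
    have H : HasDerivAt
        (fun y => (t ^ 2 / 2) * (Real.sinh (y * (1 + t)) / (1 + t) -
            Real.sinh (y * (1 - t)) / (1 - t)) -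
          (y * t * Real.cosh (y * t) - Real.sinh (y * t)))
        ((t ^ 2 / 2) * (Real.cosh (y * (1 + t)) * (1 + t) / (1 + t) -
            Real.cosh (y * (1 - t)) * (1 - t) / (1 - t)) -
          (t * Real.cosh (y * t) + (y * t) * (Real.sinh (y * t) * t) -
            Real.cosh (y * t) * t)) y :=
      (((((hasDerivAt_mul_const (1 + t)).sinh.div_const (1 + t)).sub
          (((hasDerivAt_mul_const (1 - t)).sinh.div_const (1 - t)))).const_mul (t ^ 2 / 2)).sub
        (((hasDerivAt_mul_const t).mul ((hasDerivAt_mul_const t).cosh)).sub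
          ((hasDerivAt_mul_const t).sinh)))
    have e1 : Real.cosh (y * (1 + t)) =
        Real.cosh y * Real.cosh (y * t) + Real.sinh y * Real.sinh (y * t) := by
      rw [show y * (1 + t) = y + y * t by ring, Real.cosh_add]
    have e2 : Real.cosh (y * (1 - t)) =
        Real.cosh y * Real.cosh (y * t) - Real.sinh y * Real.sinh (y * t) := by
      rw [show y * (1 - t) = y - y * t by ring, Real.cosh_sub]
    convert H using 1
    rw [e1, e2]
    field_simp
    ring
  have h := aux_pos_of_deriv _ _ hder (fun y hy => by
    have h1 : y < Real.sinh y := Real.self_lt_sinh_iff.2 hy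
    have h2 : 0 < Real.sinh (y * t) := Real.sinh_pos_iff.2 (by positivity)
    have h3 : (0:ℝ) < t ^ 2 := by positivity
    exact mul_pos (mul_pos h3 h2) (by linarith))
  intro r hr
  have h2 := h r hr
  simp only [zero_mul, Real.sinh_zero, Real.cosh_zero, zero_div, sub_zero, mul_zero, mul_one,
    sub_self, zero_sub, neg_zero] at h2
  exact h2

lemma Gpos {t : ℝ} (ht0 : 0 < t) (ht1 : t < 1) {r : ℝ} (hr : 0 < r) :
    0 < t ^ 2 * Real.sinh r * ψ r - ψ (r * t) * (r + t ^ 2 * φ r) := by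
  have hpt : (0:ℝ) < 1 + t := by linarith
  have hmt : (0:ℝ) < 1 - t := by linarith
  have hS : 0 < Real.sinh r := Real.sinh_pos_iff.2 hr
  have hs : 0 < Real.sinh (r * t) := Real.sinh_pos_iff.2 (by positivity)
  have hF := Fpos ht0 ht1 r hr
  have e1 : Real.sinh (r * (1 + t)) =
      Real.sinh r * Real.cosh (r * t) + Real.cosh r * Real.sinh (r * t) := by
    rw [show r * (1 + t) = r + r * t by ring, Real.sinh_add]
  have e2 : Real.sinh (r * (1 - t)) =
      Real.sinh r * Real.cosh (r * t) - Real.cosh r * Real.sinh (r * t) := by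
    rw [show r * (1 - t) = r - r * t by ring, Real.sinh_sub]
  have hid : (t ^ 2 * Real.sinh r * ψ r - ψ (r * t) * (r + t ^ 2 * φ r)) * Real.sinh (r * t)
      = r * (1 - t ^ 2) *
        ((t ^ 2 / 2) * (Real.sinh (r * (1 + t)) / (1 + t) - Real.sinh (r * (1 - t)) / (1 - t)) -
          (r * t * Real.cosh (r * t) - Real.sinh (r * t))) := by
    unfold ψ coth φ
    rw [e1, e2]
    field_simp
    try ring
  nlinarith [mul_pos (mul_pos hr (show (0:ℝ) < 1 - t ^ 2 by nlinarith)) hF, hid, hs]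

lemma Qpos {t : ℝ} (ht0 : 0 < t) (ht1 : t < 1) {r : ℝ} (hr : 0 < r) :
    4 * r * (1 - t ^ 2) * ψ (r * t) * ψ r < t ^ 2 * (ψ r - ψ (r * t)) * φ (2 * r) := by
  have hS : 0 < Real.sinh r := Real.sinh_pos_iff.2 hr
  have hX : 0 < ψ (r * t) := ψ_pos (by positivity)
  have hY : 0 < ψ r := ψ_pos hr
  have hXY : ψ (r * t) < ψ r :=
    ψ_strictMono (mem_Ioi.2 (by positivity)) (mem_Ioi.2 hr) (by nlinarith)
  have hG := Gpos ht0 ht1 hr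
  rw [show φ r = Real.sinh r - r from rfl] at hG
  have h4 : 4 * Real.sinh r * ψ r ≤ φ (2 * r) := by
    have h := L2 r hr.le
    have e : Real.sinh r * ψ r = r * Real.cosh r - Real.sinh r := by
      unfold ψ coth
      field_simp
    nlinarith [e, h]
  have hstep : t ^ 2 * (ψ r - ψ (r * t)) * (4 * Real.sinh r * ψ r) ≤
      t ^ 2 * (ψ r - ψ (r * t)) * φ (2 * r) := by
    apply mul_le_mul_of_nonneg_left h4
    nlinarith
  nlinarith [hstep, mul_pos hY hG, hY, hX, hXY]

set_option maxHeartbeats 1000000 in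
theorem stmt_14 (s r β : ℝ) (hs0 : 0 < s) (hs1 : s < 1) (hr : 0 < r)
    (hβl : s ^ 2 < β) (hβu : β < 1)
    (P₁ P₂sq P₃ : ℝ)
    (hP₁ : P₁ = 2 * Real.sqrt β * (ψ (r * Real.sqrt β) - ψ r) / r)
    (hP₂sq : P₂sq = 16 * (β - s ^ 2) * (1 - β) * (ψ (r * Real.sqrt β)) ^ 2 / β)
    (hP₃ : P₃ = (1 / (2 * β * Real.sqrt β)) *
      ((s ^ 2 / Real.sqrt β) * φ (2 * r * Real.sqrt β) - β ^ 2 * φ (2 * r) +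
        4 * r * (β - s ^ 2) * (1 - β) * ψ (r * Real.sqrt β))) :
    P₁ < 0 ∧
      ∀ P₂ : ℝ, P₂ ^ 2 = P₂sq →
        ∀ u v : ℝ, ¬(u = 0 ∧ v = 0) →
          P₁ * u ^ 2 + P₂ * u * v + P₃ * v ^ 2 < 0 := by
  have hβ0 : 0 < β := lt_trans (by positivity) hβl
  set t := Real.sqrt β with htdef
  have ht2 : t ^ 2 = β := Real.sq_sqrt hβ0.le
  have ht0 : 0 < t := Real.sqrt_pos.2 hβ0
  have ht1 : t < 1 := by nlinarith [ht2]
  have hβt : β = t ^ 2 := ht2.symm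
  rw [hβt] at hP₂sq hP₃ hβl hβu
  have hA : 0 < t ^ 2 - s ^ 2 := by linarith
  have hB : 0 < 1 - t ^ 2 := by linarith
  set X := ψ (r * t) with hXdef
  set Y := ψ r with hYdef
  set Pb := φ (2 * r * t) with hPbdef
  set Pr := φ (2 * r) with hPrdef
  have hX : 0 < X := ψ_pos (by positivity)
  have hY : 0 < Y := ψ_pos hr
  have hXY : X < Y :=
    ψ_strictMono (mem_Ioi.2 (by positivity)) (mem_Ioi.2 hr) (by nlinarith)
  have hQ := Qpos ht0 ht1 hr
  have hPb : Pb ≤ t ^ 3 * Pr := phi_scale ht0.le ht1.le r hr.le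
  have hP1neg : P₁ < 0 := by
    rw [hP₁]
    apply div_neg_of_neg_of_pos _ hr
    nlinarith
  refine ⟨hP1neg, ?_⟩
  -- discriminant
  have hd : P₂sq - 4 * P₁ * P₃ = (4 / (r * t ^ 2)) *
      (4 * r * (t ^ 2 - s ^ 2) * (1 - t ^ 2) * X ^ 2 +
        (Y - X) * ((s ^ 2 / t) * Pb - (t ^ 2) ^ 2 * Pr +
          4 * r * (t ^ 2 - s ^ 2) * (1 - t ^ 2) * X)) := by
    rw [hP₁, hP₂sq, hP₃]
    field_simp
    ring
  have hstep1 : (s ^ 2 / t) * Pb ≤ s ^ 2 * t ^ 2 * Pr := by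
    calc (s ^ 2 / t) * Pb ≤ (s ^ 2 / t) * (t ^ 3 * Pr) :=
          mul_le_mul_of_nonneg_left hPb (by positivity)
      _ = s ^ 2 * t ^ 2 * Pr := by field_simp
  have hstep2 : 4 * r * (t ^ 2 - s ^ 2) * (1 - t ^ 2) * X ^ 2 +
      (Y - X) * ((s ^ 2 / t) * Pb - (t ^ 2) ^ 2 * Pr +
        4 * r * (t ^ 2 - s ^ 2) * (1 - t ^ 2) * X) ≤
      (t ^ 2 - s ^ 2) * (4 * r * (1 - t ^ 2) * X * Y - t ^ 2 * (Y - X) * Pr) := by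
    nlinarith [mul_le_mul_of_nonneg_left hstep1 (by linarith : (0:ℝ) ≤ Y - X)]
  have hbr : 4 * r * (t ^ 2 - s ^ 2) * (1 - t ^ 2) * X ^ 2 +
      (Y - X) * ((s ^ 2 / t) * Pb - (t ^ 2) ^ 2 * Pr +
        4 * r * (t ^ 2 - s ^ 2) * (1 - t ^ 2) * X) < 0 := by
    apply lt_of_le_of_lt hstep2
    have hneg : 4 * r * (1 - t ^ 2) * X * Y - t ^ 2 * (Y - X) * Pr < 0 := by nlinarith [hQ]
    exact mul_neg_of_pos_of_neg hA hneg
  have hdisc : P₂sq - 4 * P₁ * P₃ < 0 := by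
    rw [hd]
    exact mul_neg_of_pos_of_neg (by positivity) hbr
  intro P₂ hP2 u v huv
  have hdisc2 : P₂ ^ 2 - 4 * P₁ * P₃ < 0 := by rw [hP2]; exact hdisc
  rcases eq_or_ne v 0 with hv | hv
  · have hu : u ≠ 0 := by
      intro h; exact huv ⟨h, hv⟩
    have hu2 : 0 < u ^ 2 := by positivity
    rw [hv]
    have hx : P₁ * u ^ 2 < 0 := mul_neg_of_neg_of_pos hP1neg hu2
    nlinarith [hx]
  · have hv2 : 0 < v ^ 2 := by positivity
    nlinarith [sq_nonneg (2 * P₁ * u + P₂ * v),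
      mul_pos (by linarith : (0:ℝ) < 4 * P₁ * P₃ - P₂ ^ 2) hv2, hP1neg]
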